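/- Fix an integer K > 2 and r₁ ∈ (0,1). The image of R_K(r₁) under p is exactly the half-open interval p(R_K(r₁)) = ( 2r₁/(2r₁ + 1), 2(K − 2 + r₁)/(4(K − 2 + r₁) + 1 − K·r₁) ]. -/

import Mathlib

open Finset

/-- AM-HM inequality via Cauchy-Schwarz. -/
lemma amhm_aux (T : Finset ℕ) (a : ℕ → ℝ) (ha : ∀ i ∈ T, 0 < a i) :
    (T.card : ℝ)^2 / (∑ i ∈ T, a i) ≤ ∑ i ∈ T, 1 / a i := by
  rcases T.eq_empty_or_nonempty with rfl | hne
  · simp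
  have hsum : 0 < ∑ i ∈ T, a i := Finset.sum_pos ha hne
  rw [div_le_iff₀ hsum]
  have h := Finset.sum_mul_sq_le_sq_mul_sq T (fun i => Real.sqrt (a i))
      (fun i => 1 / Real.sqrt (a i))
  have h1 : ∑ i ∈ T, Real.sqrt (a i) * (1 / Real.sqrt (a i)) = (T.card : ℝ) := by
    rw [Finset.sum_congr rfl (fun i hi =>
      show Real.sqrt (a i) * (1 / Real.sqrt (a i)) = 1 by
        rw [mul_one_div, div_self (ne_of_gt (Real.sqrt_pos.mpr (ha i hi)))])]
    simp
  have h2 : ∑ i ∈ T, (Real.sqrt (a i))^2 = ∑ i ∈ T, a i :=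
    Finset.sum_congr rfl fun i hi => Real.sq_sqrt (ha i hi).le
  have h3 : ∑ i ∈ T, (1 / Real.sqrt (a i))^2 = ∑ i ∈ T, 1 / a i :=
    Finset.sum_congr rfl fun i hi => by
      rw [div_pow, one_pow, Real.sq_sqrt (ha i hi).le]
  rw [h1, h2, h3] at h
  linarith

set_option maxHeartbeats 2000000 in
/-- For `K > 2` and `r₁ ∈ (0,1)`, the image of `R_K(r₁)` under `p` is exactly the
half-open interval `(2r₁/(2r₁+1), 2(K−2+r₁)/(4(K−2+r₁)+1−K·r₁)]`
(names indexed by `0, …, K-1`, with `n₁` corresponding to index `0`). -/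
theorem image_p_RK_r1_eq_Ioc
    (K : ℕ) (hK : 2 < K) (r1 : ℝ) (hr1 : r1 ∈ Set.Ioo (0 : ℝ) 1) :
    {t : ℝ | ∃ r : ℕ → ℝ,
        (∀ k < K, r k ∈ Set.Ioo (0 : ℝ) 1) ∧
        (∑ k ∈ Finset.range K, r k = 1) ∧
        (∀ i j, 1 ≤ i → i ≤ j → j < K → r j ≤ r i) ∧
        r 0 = r1 ∧
        t = 2 / (3 + ∑ k ∈ Finset.Ico 1 K, r k / (1 - r k))}
      = Set.Ioc (2 * r1 / (2 * r1 + 1))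
          (2 * ((K : ℝ) - 2 + r1) / (4 * ((K : ℝ) - 2 + r1) + 1 - (K : ℝ) * r1)) := by
  obtain ⟨hr1a, hr1b⟩ := hr1
  set Kc : ℝ := (K : ℝ) with hKcdef
  have hK3 : (3:ℝ) ≤ Kc := by rw [hKcdef]; exact_mod_cast hK
  set s : ℝ := 1 - r1 with hsdef
  have hs0 : 0 < s := by rw [hsdef]; linarith
  have hs1 : s < 1 := by rw [hsdef]; linarith
  have hden1 : (0:ℝ) < Kc - 2 + r1 := by linarith
  have hden2 : (0:ℝ) < 4 * (Kc - 2 + r1) + 1 - Kc * r1 := by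
    nlinarith [mul_nonneg (by linarith : (0:ℝ) ≤ Kc - 3) (by linarith : (0:ℝ) ≤ 4 - r1)]
  set M : ℝ := (Kc - 1) * s / (Kc - 2 + r1) with hMdef
  set L : ℝ := s / (1 - s) with hLdef
  clear_value Kc s M L
  have hM0 : 0 < M := by
    rw [hMdef]; exact div_pos (mul_pos (show (0:ℝ) < Kc - 1 by linarith) hs0) hden1
  have hL0 : 0 < L := by rw [hLdef]; exact div_pos hs0 (by linarith)
  have h3L : 3 + L = (2 * r1 + 1) / r1 := by
    rw [hLdef, hsdef, show (1:ℝ) - (1 - r1) = r1 by ring]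
    field_simp
    ring
  have h3M : 3 + M = (4 * (Kc - 2 + r1) + 1 - Kc * r1) / (Kc - 2 + r1) := by
    rw [hMdef, hsdef]
    field_simp
    ring
  have hlow : 2 / (3 + L) = 2 * r1 / (2 * r1 + 1) := by
    rw [h3L, div_div_eq_mul_div]
  have hhigh : 2 / (3 + M) = 2 * (Kc - 2 + r1) / (4 * (Kc - 2 + r1) + 1 - Kc * r1) := by
    rw [h3M, div_div_eq_mul_div]
  ext t
  simp only [Set.mem_setOf_eq, Set.mem_Ioc]
  constructor
  · rintro ⟨r, hio, hsum, hord, hr0, ht⟩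
    have hT1 : (1:ℕ) ≤ K := by omega
    have hcard : (Finset.Ico 1 K).card = K - 1 := by rw [Nat.card_Ico]
    have hTne : (Finset.Ico 1 K).Nonempty := by
      rw [← Finset.card_pos, hcard]; omega
    have hpos : ∀ k ∈ Finset.Ico 1 K, 0 < r k := fun k hk =>
      (hio k (Finset.mem_Ico.mp hk).2).1
    have hlt1 : ∀ k ∈ Finset.Ico 1 K, r k < 1 := fun k hk =>
      (hio k (Finset.mem_Ico.mp hk).2).2
    have hsumT : ∑ k ∈ Finset.Ico 1 K, r k = s := by
      have hsplit := Finset.sum_Ico_consecutive r (Nat.zero_le 1) (by omega : 1 ≤ K)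
      rw [← Finset.range_eq_Ico, ← Finset.range_eq_Ico] at hsplit
      have h0 : ∑ k ∈ Finset.range 1, r k = r1 := by
        rw [Finset.sum_range_one, hr0]
      rw [hsdef]; linarith
    have hrks : ∀ k ∈ Finset.Ico 1 K, r k < s := by
      intro k hk
      have he := Finset.sum_erase_add (Finset.Ico 1 K) r hk
      have hene : ((Finset.Ico 1 K).erase k).Nonempty := by
        rw [← Finset.card_pos, Finset.card_erase_of_mem hk, hcard]; omega
      have hpos' : 0 < ∑ j ∈ (Finset.Ico 1 K).erase k, r j :=
        Finset.sum_pos (fun j hj => hpos j (Finset.mem_of_mem_erase hj)) hene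
      linarith
    have hSL : (∑ k ∈ Finset.Ico 1 K, r k / (1 - r k)) < L := by
      have h1 : (∑ k ∈ Finset.Ico 1 K, r k / (1 - r k)) <
          ∑ k ∈ Finset.Ico 1 K, r k / (1 - s) :=
        Finset.sum_lt_sum_of_nonempty hTne fun k hk =>
          div_lt_div_of_pos_left (hpos k hk) (by linarith) (by linarith [hrks k hk])
      rw [← Finset.sum_div, hsumT] at h1
      rw [hLdef]
      exact h1
    have hMS : M ≤ ∑ k ∈ Finset.Ico 1 K, r k / (1 - r k) := by
      have ha : ∀ i ∈ Finset.Ico 1 K, 0 < 1 - r i := fun i hi => by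
        linarith [hlt1 i hi]
      have hamhm := amhm_aux (Finset.Ico 1 K) (fun i => 1 - r i) ha
      have hcards : ((Finset.Ico 1 K).card : ℝ) = Kc - 1 := by
        rw [hcard, Nat.cast_sub hT1, hKcdef]; norm_num
      have hsa : ∑ i ∈ Finset.Ico 1 K, (1 - r i) = Kc - 1 - s := by
        rw [Finset.sum_sub_distrib, hsumT, Finset.sum_const, nsmul_eq_mul, mul_one, hcards]
      simp only [hcards, hsa] at hamhm
      have hterm : ∑ k ∈ Finset.Ico 1 K, r k / (1 - r k)
          = (∑ k ∈ Finset.Ico 1 K, 1 / (1 - r k)) - (Kc - 1) := by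
        rw [Finset.sum_congr rfl (fun k hk =>
          show r k / (1 - r k) = 1 / (1 - r k) - 1 by
            have h := ha k hk
            field_simp; ring)]
        rw [Finset.sum_sub_distrib, Finset.sum_const, nsmul_eq_mul, mul_one, hcards]
      have hkey : (Kc - 1)^2 / (Kc - 1 - s) - (Kc - 1) = M := by
        have hne : Kc - 1 - (1 - r1) ≠ 0 := ne_of_gt (by linarith)
        rw [hMdef, hsdef]
        field_simp
        ring
      rw [hterm]
      linarith
    have h3S : 0 < 3 + ∑ k ∈ Finset.Ico 1 K, r k / (1 - r k) := by linarith
    constructor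
    · rw [ht, ← hlow]
      exact div_lt_div_of_pos_left (by norm_num) h3S (by linarith)
    · rw [ht, ← hhigh]
      exact div_le_div_of_nonneg_left (by norm_num) (by linarith) (by linarith)
  · rintro ⟨hlt, hle⟩
    have ht0 : 0 < t :=
      lt_trans (div_pos (by linarith) (by linarith)) hlt
    set S0 : ℝ := 2 / t - 3 with hS0def
    clear_value S0
    have hMS0 : M ≤ S0 := by
      rw [← hhigh] at hle
      have h1 : 0 < 3 + M := by linarith
      have h2 := (le_div_iff₀ h1).mp hle
      rw [hS0def, le_sub_iff_add_le, le_div_iff₀ ht0]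
      nlinarith
    have hS0L : S0 < L := by
      rw [← hlow] at hlt
      have h1 : 0 < 3 + L := by linarith
      have h2 := (div_lt_iff₀ h1).mp hlt
      rw [hS0def, sub_lt_iff_lt_add, div_lt_iff₀ ht0]
      nlinarith
    set e0 : ℝ := s / (Kc - 1) with he0def
    clear_value e0
    have he00 : 0 < e0 := by rw [he0def]; exact div_pos hs0 (by linarith)
    have he01 : e0 < 1 := by
      rw [he0def, div_lt_one (by linarith)]; linarith
    set g : ℝ → ℝ := fun e =>
      (s - (Kc - 2) * e) / (1 - (s - (Kc - 2) * e)) + (Kc - 2) * (e / (1 - e)) with hgdef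
    clear_value g
    have hKc1 : Kc - 1 ≠ 0 := ne_of_gt (by linarith)
    have hKc1s : Kc - 1 - s ≠ 0 := ne_of_gt (by rw [hsdef]; linarith)
    have hg0 : g 0 = L := by
      simp only [hgdef]
      rw [hLdef]
      norm_num
    have hge0 : g e0 = M := by
      have key : s - (Kc - 2) * e0 = e0 := by
        rw [he0def]; field_simp; ring
      have h1e0 : 0 < 1 - e0 := by linarith
      simp only [hgdef]
      rw [key]
      have hd : 1 - e0 = (Kc - 1 - s) / (Kc - 1) := by
        rw [he0def]; field_simp
      have hfrac : e0 / (1 - e0) = s / (Kc - 1 - s) := by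
        rw [hd, he0def]; field_simp
      rw [show e0 / (1 - e0) + (Kc - 2) * (e0 / (1 - e0))
            = (Kc - 1) * (e0 / (1 - e0)) by ring, hfrac,
        show Kc - 1 - s = Kc - 2 + r1 by rw [hsdef]; ring, hMdef, mul_div_assoc]
    have hcont : ContinuousOn g (Set.Icc 0 e0) := by
      rw [hgdef]
      apply ContinuousOn.add
      · apply ContinuousOn.div (by fun_prop) (by fun_prop)
        intro x hx
        obtain ⟨hx0, hx1⟩ := hx
        have h1 : 0 ≤ (Kc - 2) * x := mul_nonneg (by linarith) hx0
        exact ne_of_gt (by linarith : (0:ℝ) < 1 - (s - (Kc - 2) * x))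
      · apply ContinuousOn.mul continuousOn_const
        apply ContinuousOn.div (by fun_prop) (by fun_prop)
        intro x hx
        obtain ⟨hx0, hx1⟩ := hx
        exact ne_of_gt (by linarith : (0:ℝ) < 1 - x)
    have hmem : S0 ∈ Set.Icc (g e0) (g 0) := by
      rw [hg0, hge0]; exact ⟨hMS0, le_of_lt hS0L⟩
    obtain ⟨e, he, hge⟩ := intermediate_value_Icc' (le_of_lt he00) hcont hmem
    obtain ⟨he0', he1'⟩ := he
    have hepos : 0 < e := by
      rcases lt_or_eq_of_le he0' with h | h
      · exact h
      · exfalso; rw [← h, hg0] at hge; linarith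
    have he1 : e < 1 := lt_of_le_of_lt he1' he01
    have heK : e * (Kc - 1) ≤ s := by
      have h1 : e ≤ s / (Kc - 1) := he0def ▸ he1'
      exact (le_div_iff₀ (by linarith : (0:ℝ) < Kc - 1)).mp h1
    have hring : e * (Kc - 1) - (Kc - 2) * e = e := by ring
    have hb0 : 0 < s - (Kc - 2) * e := by linarith
    have hb1 : s - (Kc - 2) * e < 1 := by
      have := mul_pos (by linarith : (0:ℝ) < Kc - 2) hepos
      linarith
    have hemono : e ≤ s - (Kc - 2) * e := by linarith
    have hgeval : (s - (Kc - 2) * e) / (1 - (s - (Kc - 2) * e)) + (Kc - 2) * (e / (1 - e)) = S0 := by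
      rw [← hge, hgdef]
    refine ⟨fun k => if k = 0 then r1 else if k = 1 then s - (Kc - 2) * e else e,
      ?_, ?_, ?_, ?_, ?_⟩
    · intro k hk
      by_cases h0 : k = 0
      · simp only [h0, if_pos rfl]; exact ⟨hr1a, hr1b⟩
      · by_cases h1 : k = 1
        · simp only [if_neg h0, h1, if_pos rfl]
          exact ⟨hb0, hb1⟩
        · simp only [if_neg h0, if_neg h1]
          exact ⟨hepos, he1⟩
    · rw [Finset.range_eq_Ico,
        ← Finset.sum_Ico_consecutive _ (Nat.zero_le 1) (by omega : 1 ≤ K),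
        ← Finset.sum_Ico_consecutive _ (by omega : 1 ≤ 2) (by omega : 2 ≤ K),
        show Finset.Ico 0 1 = {0} from rfl, show Finset.Ico 1 2 = {1} from rfl,
        Finset.sum_singleton, Finset.sum_singleton]
      rw [Finset.sum_congr rfl (fun k hk =>
        show (if k = 0 then r1 else if k = 1 then s - (Kc - 2) * e else e) = e by
          obtain ⟨h2, _⟩ := Finset.mem_Ico.mp hk
          rw [if_neg (by omega), if_neg (by omega)])]
      rw [Finset.sum_const, Nat.card_Ico, nsmul_eq_mul,
        Nat.cast_sub (by omega : 2 ≤ K)]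
      norm_num
      rw [hsdef, hKcdef]
      ring
    · intro i j h1i hij hjK
      simp only
      split_ifs <;> first | linarith | (exfalso; omega)
    · norm_num
    · rw [← Finset.sum_Ico_consecutive _ (by omega : 1 ≤ 2) (by omega : 2 ≤ K),
        show Finset.Ico 1 2 = {1} from rfl, Finset.sum_singleton]
      rw [Finset.sum_congr rfl (fun k hk =>
        show (if k = 0 then r1 else if k = 1 then s - (Kc - 2) * e else e) /
            (1 - if k = 0 then r1 else if k = 1 then s - (Kc - 2) * e else e) = e / (1 - e) by
          obtain ⟨h2, _⟩ := Finset.mem_Ico.mp hk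
          rw [if_neg (by omega : ¬ k = 0), if_neg (by omega : ¬ k = 1)])]
      rw [Finset.sum_const, Nat.card_Ico, nsmul_eq_mul,
        Nat.cast_sub (by omega : 2 ≤ K)]
      norm_num
      rw [← hKcdef]
      rw [hgeval, hS0def]
      rw [show (3:ℝ) + (2 / t - 3) = 2 / t by ring]
      field_simp
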